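/- With the labeling q_1,…,q_r, a_1,…,a_k of the arcs of the fixed proper circular arc representation of the minimum counterexample 𝒢: for all i and j with 1 ≤ j ≤ x and 1 ≤ i ≤ k − x, the arc a_{i+j} is clockwise adjacent to the arc a_i. -/

import Mathlib

open SimpleGraph
open scoped Classical

instance : Fact ((0:ℝ) < 1) := ⟨one_pos⟩

/-- An arc on the unit circle `AddCircle 1`, described by its left endpoint (the first
endpoint met anticlockwise from an interior point) and its (clockwise) length.
Since `0 < len < 1`, an arc is neither a single point nor the whole circle. -/
structure CArc where
  left : AddCircle (1:ℝ)
  len : ℝ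
  len_pos : 0 < len
  len_lt_one : len < 1

namespace CArc

/-- The set of points of the arc: going clockwise from the left endpoint for `len`. -/
def pts (a : CArc) : Set (AddCircle (1:ℝ)) :=
  {q | ∃ t : ℝ, 0 ≤ t ∧ t ≤ a.len ∧ q = a.left + (t : AddCircle (1:ℝ))}

/-- The right endpoint of an arc. -/
noncomputable def right (a : CArc) : AddCircle (1:ℝ) := a.left + ((a.len : ℝ) : AddCircle (1:ℝ))

end CArc

/-- A family of arcs on the circle: a finite set of arcs with all endpoints distinct. -/
structure ArcFamily where
  arcs : Finset CArc
  endpoints_distinct :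
    ∀ a ∈ arcs, ∀ b ∈ arcs, a ≠ b →
      a.left ≠ b.left ∧ a.left ≠ b.right ∧ a.right ≠ b.left ∧ a.right ≠ b.right

namespace ArcFamily

/-- A family of arcs is proper if no arc is properly contained in another. -/
def IsProper (F : ArcFamily) : Prop :=
  ∀ a ∈ F.arcs, ∀ b ∈ F.arcs, ¬ a.pts ⊂ b.pts

/-- The overlap set of a point `p`: all arcs of the family containing `p`. -/
noncomputable def overlap (F : ArcFamily) (p : AddCircle (1:ℝ)) : Finset CArc :=
  F.arcs.filter fun a => p ∈ a.pts

/-- `r_sup`: the maximum cardinality of an overlap set. -/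
noncomputable def rsup (F : ArcFamily) : ℕ :=
  sSup {n | ∃ p, (F.overlap p).card = n}

/-- `r_inf`: the minimum cardinality of an overlap set. -/
noncomputable def rinf (F : ArcFamily) : ℕ :=
  sInf {n | ∃ p, (F.overlap p).card = n}

/-- The circular arc graph of a family: vertices are the arcs, two distinct arcs are
adjacent iff they intersect. -/
def graph (F : ArcFamily) : SimpleGraph {a : CArc // a ∈ F.arcs} where
  Adj u v := u ≠ v ∧ (u.1.pts ∩ v.1.pts).Nonempty
  symm := ⟨by rintro u v ⟨h, q, h1, h2⟩; exact ⟨h.symm, q, h2, h1⟩⟩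
  loopless := ⟨by rintro u ⟨h, -⟩; exact h rfl⟩

/-- `F.CwAdj u v` : the arc `v` is clockwise adjacent to the arc `u`,
i.e. `v ≠ u` and `v ∈ O(r(u))`. -/
def CwAdj (F : ArcFamily) (u v : CArc) : Prop :=
  v ≠ u ∧ v ∈ F.overlap u.right

/-- `F.AcwAdj u v` : the arc `v` is anticlockwise adjacent to the arc `u`,
i.e. `v ≠ u` and `v ∈ O(l(u))`. -/
def AcwAdj (F : ArcFamily) (u v : CArc) : Prop :=
  v ≠ u ∧ v ∈ F.overlap u.left

end ArcFamily

/-- `G` has a complete minor on `m` vertices: there are `m` pairwise disjoint connected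
branch sets with an edge of `G` between any two of them. -/
def HasKMinor {V : Type*} (G : SimpleGraph V) (m : ℕ) : Prop :=
  ∃ B : Fin m → Set V,
    (∀ i, (G.induce (B i)).Connected) ∧
    (Pairwise fun i j => Disjoint (B i) (B j)) ∧
    (Pairwise fun i j => ∃ u ∈ B i, ∃ v ∈ B j, G.Adj u v)

/-- A graph is a proper circular arc graph if it is isomorphic to the circular arc graph
of some proper family of arcs. -/
def IsProperCircularArcGraph {V : Type*} (G : SimpleGraph V) : Prop :=
  ∃ F : ArcFamily, F.IsProper ∧ Nonempty (G ≃g F.graph)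

/-- The clockwise angular distance from `p` to `q`: the unique `t ∈ [0,1)`
with `q = p + t`.  Points are "encountered" in clockwise order of this quantity
when traversing clockwise from `p`. -/
noncomputable def angFrom (p q : AddCircle (1:ℝ)) : ℝ :=
  ((AddCircle.equivIco (1:ℝ) 0) (q - p) : ℝ)

/-- A minimum counterexample to Hadwiger's conjecture among proper circular arc graphs:
a proper family of arcs whose circular arc graph `𝒢` has no complete minor on `χ(𝒢)`
vertices, while every proper circular arc graph on fewer vertices than `𝒢` has a
complete minor on its own chromatic number of vertices. -/
structure MinCounterexample where
  F : ArcFamily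
  proper : F.IsProper
  no_clique_minor : ∀ m : ℕ, F.graph.chromaticNumber = m → ¬ HasKMinor F.graph m
  minimal : ∀ (V : Type) [inst : Fintype V] (G : SimpleGraph V),
    IsProperCircularArcGraph G → Fintype.card V < F.arcs.card →
    ∀ m : ℕ, G.chromaticNumber = m → HasKMinor G m

/-- A minimum counterexample `𝒢` to Hadwiger's conjecture among proper circular arc
graphs, together with a fixed maximum overlap set `O = O(p₀)` of cardinality `r`,
the quantities `x = χ(𝒢) − r` and `k = n − r`, and the labeling `q 1, …, q r`
(the arcs of `O`) and `a 1, …, a k` (the remaining arcs) of the arcs of the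
representation in the clockwise order, starting from `p₀`, in which their right
endpoints are encountered. -/
structure LabeledMinCounterexample extends MinCounterexample where
  p₀ : AddCircle (1:ℝ)
  r : ℕ
  x : ℕ
  k : ℕ
  q : ℕ → CArc
  a : ℕ → CArc
  hr : (F.overlap p₀).card = r
  hmax : r = F.rsup
  hx : F.graph.chromaticNumber = ((r + x : ℕ) : ℕ∞)
  hk : F.arcs.card = r + k
  q_mem : ∀ i, 1 ≤ i → i ≤ r → q i ∈ F.overlap p₀
  a_mem : ∀ j, 1 ≤ j → j ≤ k → a j ∈ F.arcs ∧ a j ∉ F.overlap p₀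
  q_inj : ∀ i i', 1 ≤ i → i ≤ r → 1 ≤ i' → i' ≤ r → q i = q i' → i = i'
  a_inj : ∀ j j', 1 ≤ j → j ≤ k → 1 ≤ j' → j' ≤ k → a j = a j' → j = j'
  q_order : ∀ i i', 1 ≤ i → i < i' → i' ≤ r →
    angFrom p₀ (q i).right < angFrom p₀ (q i').right
  a_order : ∀ j j', 1 ≤ j → j < j' → j' ≤ k →
    angFrom p₀ (a j).right < angFrom p₀ (a j').right
  qa_order : ∀ i j, 1 ≤ i → i ≤ r → 1 ≤ j → j ≤ k →
    angFrom p₀ (q i).right < angFrom p₀ (a j).right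

section Aux

lemma coe_angFrom (p q : AddCircle (1:ℝ)) :
    ((angFrom p q : ℝ) : AddCircle (1:ℝ)) = q - p := by
  exact (AddCircle.equivIco (1:ℝ) 0).symm_apply_apply (q - p)

lemma eq_add_angFrom (p q : AddCircle (1:ℝ)) :
    q = p + ((angFrom p q : ℝ) : AddCircle (1:ℝ)) := by
  rw [coe_angFrom]; abel

lemma angFrom_mem (p q : AddCircle (1:ℝ)) : angFrom p q ∈ Set.Ico (0:ℝ) 1 := by
  have := ((AddCircle.equivIco (1:ℝ) 0) (q - p)).2
  simpa [angFrom] using this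

lemma angFrom_coe (p : AddCircle (1:ℝ)) {t : ℝ} (h : t ∈ Set.Ico (0:ℝ) 1) :
    angFrom p (p + (t : AddCircle (1:ℝ))) = t := by
  have h1 : p + (t : AddCircle (1:ℝ)) - p = (t : AddCircle (1:ℝ)) := by abel
  rw [angFrom, h1]
  have h2 : ((AddCircle.equivIco (1:ℝ) 0) (t : AddCircle (1:ℝ)) : ℝ)
      = toIcoMod (one_pos (α := ℝ)) 0 t := by
    simp [AddCircle.equivIco, QuotientAddGroup.equivIcoMod_coe]
  rw [h2, toIcoMod_eq_self]
  simpa using h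

lemma angFrom_inj {p q q' : AddCircle (1:ℝ)} (h : angFrom p q = angFrom p q') : q = q' := by
  rw [eq_add_angFrom p q, eq_add_angFrom p q', h]

end Aux
lemma CArc.left_mem (a : CArc) : a.left ∈ a.pts :=
  ⟨0, le_refl 0, a.len_pos.le, by simp⟩

lemma CArc.right_mem (a : CArc) : a.right ∈ a.pts :=
  ⟨a.len, a.len_pos.le, le_rfl, rfl⟩

/-- The "gap lemma": if `p ∈ v`, `p ∉ w` and the right endpoint of `w` occurs
(clockwise from `p`) no later than that of `v`, then `w ⊊ v`, contradicting properness. -/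
lemma gap_lemma {F : ArcFamily} (hF : F.IsProper) {v w : CArc} (hv : v ∈ F.arcs)
    (hw : w ∈ F.arcs) (p : AddCircle (1:ℝ)) (hpv : p ∈ v.pts) (hpw : p ∉ w.pts)
    (hβ : angFrom p w.right ≤ angFrom p v.right) : False := by
  obtain ⟨s, hs0, hsl, hps⟩ := id hpv
  have hβv : angFrom p v.right = v.len - s := by
    have h1 : v.right = p + ((v.len - s : ℝ) : AddCircle (1:ℝ)) := by
      rw [hps, CArc.right, AddCircle.coe_sub]
      abel
    rw [h1, angFrom_coe]
    exact ⟨by linarith, by linarith [v.len_lt_one]⟩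
  set β := angFrom p w.right with hβdef
  have hβ0 : 0 ≤ β := (angFrom_mem _ _).1
  have hwr : w.right = p + ((β : ℝ) : AddCircle (1:ℝ)) := eq_add_angFrom _ _
  have hlenw : w.len < β := by
    by_contra h
    push_neg at h
    refine hpw ⟨w.len - β, by linarith, by linarith, ?_⟩
    have h2 : w.left = w.right - ((w.len : ℝ) : AddCircle (1:ℝ)) := by
      rw [CArc.right]; abel
    rw [h2, hwr, AddCircle.coe_sub]
    abel
  have hwl : w.left = p + ((β - w.len : ℝ) : AddCircle (1:ℝ)) := by
    have h2 : w.left = w.right - ((w.len : ℝ) : AddCircle (1:ℝ)) := by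
      rw [CArc.right]; abel
    rw [h2, hwr, AddCircle.coe_sub]
    abel
  have hsub : w.pts ⊆ v.pts := by
    rintro z ⟨t, ht0, htl, hz⟩
    refine ⟨s + (β - w.len) + t, by linarith, ?_, ?_⟩
    · rw [hβv] at hβ; linarith
    · rw [hz, hwl, hps, AddCircle.coe_sub]
      push_cast [AddCircle.coe_add, AddCircle.coe_sub]
      abel
  exact hF w hw v hv ⟨hsub, fun h => hpw (h hpv)⟩

/-- Every neighbour of `u` in a proper family contains an endpoint of `u`. -/
lemma nbr_lemma {F : ArcFamily} (hF : F.IsProper) {u v : CArc} (hu : u ∈ F.arcs)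
    (hv : v ∈ F.arcs) (hne : (u.pts ∩ v.pts).Nonempty)
    (hl : u.left ∉ v.pts) (hr : u.right ∉ v.pts) : False := by
  obtain ⟨z, ⟨t, ht0, htl, hzt⟩, ⟨t', ht'0, ht'l, hzt'⟩⟩ := hne
  have h1 : t' ≤ t := by
    by_contra h
    push_neg at h
    refine hl ⟨t' - t, by linarith, by linarith, ?_⟩
    have : u.left = z - ((t : ℝ) : AddCircle (1:ℝ)) := by rw [hzt]; abel
    rw [this, hzt', AddCircle.coe_sub]
    abel
  have h2 : v.len - t' ≤ u.len - t := by
    by_contra h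
    push_neg at h
    refine hr ⟨t' + (u.len - t), by linarith, by linarith, ?_⟩
    have : u.right = z + ((u.len - t : ℝ) : AddCircle (1:ℝ)) := by
      rw [hzt, CArc.right, AddCircle.coe_sub]; abel
    rw [this, hzt', AddCircle.coe_add, AddCircle.coe_sub]
    abel
  have hsub : v.pts ⊆ u.pts := by
    rintro z' ⟨s', hs'0, hs'l, hz'⟩
    refine ⟨t + (s' - t'), by linarith, by linarith, ?_⟩
    have hzz : z' = z + ((s' - t' : ℝ) : AddCircle (1:ℝ)) := by
      rw [hz', hzt', AddCircle.coe_sub]; abel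
    rw [hzz, hzt, AddCircle.coe_add, AddCircle.coe_sub]
    abel
  exact hF v hv u hu ⟨hsub, fun h => hr (h (CArc.right_mem u))⟩
lemma hasKMinor_mono {V : Type*} {G : SimpleGraph V} {m m' : ℕ} (h : HasKMinor G m)
    (hle : m' ≤ m) : HasKMinor G m' := by
  obtain ⟨B, hconn, hdisj, hadj⟩ := h
  refine ⟨fun i => B (Fin.castLE hle i), fun i => hconn _, ?_, ?_⟩
  · exact fun i j hij => hdisj (fun h => hij (Fin.castLE_injective hle h))
  · exact fun i j hij => hadj (fun h => hij (Fin.castLE_injective hle h))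

lemma hasKMinor_transfer {F F' : ArcFamily} (hsub : F'.arcs ⊆ F.arcs) {m : ℕ}
    (h : HasKMinor F'.graph m) : HasKMinor F.graph m := by
  obtain ⟨B, hconn, hdisj, hadj⟩ := h
  let f : {a : CArc // a ∈ F'.arcs} → {a : CArc // a ∈ F.arcs} := fun b => ⟨b.1, hsub b.2⟩
  have hfinj : Function.Injective f := fun b b' hbb => by
    have h2 := congrArg Subtype.val hbb
    exact Subtype.ext h2
  have hadj_iff : ∀ (b b' : {a : CArc // a ∈ F'.arcs}),
      F.graph.Adj (f b) (f b') ↔ F'.graph.Adj b b' := by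
    intro b b'
    simp only [ArcFamily.graph, f, ne_eq, Subtype.mk.injEq, Subtype.ext_iff]
  refine ⟨fun i => f '' (B i), ?_, ?_, ?_⟩
  · intro i
    have e : (F'.graph.induce (B i)) ≃g (F.graph.induce (f '' B i)) := by
      refine ⟨Equiv.Set.image f (B i) hfinj, ?_⟩
      intro b b'
      simp only [comap_adj, Function.Embedding.coe_subtype, Equiv.Set.image_apply]
      exact hadj_iff _ _
    exact e.connected_iff.mp (hconn i)
  · exact fun i j hij => (Set.disjoint_image_iff hfinj).mpr (hdisj hij)
  · intro i j hij
    obtain ⟨u, hu, v, hv, huv⟩ := hadj hij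
    exact ⟨f u, Set.mem_image_of_mem f hu, f v, Set.mem_image_of_mem f hv,
      (hadj_iff u v).mpr huv⟩
lemma overlap_card_le (C : LabeledMinCounterexample) (p : AddCircle (1:ℝ)) :
    (C.F.overlap p).card ≤ C.r := by
  rw [C.hmax]
  apply le_csSup
  · refine ⟨C.F.arcs.card, ?_⟩
    rintro n ⟨p', rfl⟩
    exact Finset.card_filter_le _ _
  · exact ⟨p, rfl⟩

/-- The family obtained by deleting the arc `u`. -/
noncomputable def eraseFam (F : ArcFamily) (u : CArc) : ArcFamily where
  arcs := F.arcs.erase u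
  endpoints_distinct := fun a ha b hb hab =>
    F.endpoints_distinct a (Finset.mem_of_mem_erase ha) b (Finset.mem_of_mem_erase hb) hab

lemma eraseFam_proper {F : ArcFamily} (hF : F.IsProper) (u : CArc) :
    (eraseFam F u).IsProper :=
  fun a ha b hb => hF a (Finset.mem_of_mem_erase ha) b (Finset.mem_of_mem_erase hb)

lemma erase_colorable (C : LabeledMinCounterexample) (u : CArc) (hu : u ∈ C.F.arcs) :
    (eraseFam C.F u).graph.Colorable (C.r + C.x - 1) := by
  set F' := eraseFam C.F u with hF'
  have hcol : F'.graph.Colorable (Fintype.card {a : CArc // a ∈ F'.arcs}) :=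
    SimpleGraph.colorable_of_fintype _
  have hne_top : F'.graph.chromaticNumber ≠ ⊤ := by
    intro h
    have hle := hcol.chromaticNumber_le
    rw [h] at hle
    exact ENat.coe_ne_top _ (top_le_iff.mp hle)
  obtain ⟨m', hm'⟩ := WithTop.ne_top_iff_exists.mp hne_top
  have hcard : Fintype.card {a : CArc // a ∈ F'.arcs} < C.F.arcs.card := by
    have h1 : Fintype.card {a : CArc // a ∈ F'.arcs} = F'.arcs.card := Fintype.card_coe _
    rw [h1, hF']
    exact Finset.card_erase_lt_of_mem hu
  have hminor : HasKMinor F'.graph m' :=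
    C.minimal _ F'.graph ⟨F', eraseFam_proper C.proper u, ⟨RelIso.refl _⟩⟩ hcard m' hm'.symm
  have hm'le : m' ≤ C.r + C.x - 1 := by
    by_contra h
    push_neg at h
    have h2 : HasKMinor F'.graph (C.r + C.x) := hasKMinor_mono hminor (by omega)
    exact C.no_clique_minor (C.r + C.x) C.hx
      (hasKMinor_transfer (Finset.erase_subset _ _) h2)
  have hle2 : F'.graph.chromaticNumber ≤ ((C.r + C.x - 1 : ℕ) : ℕ∞) := by
    rw [← hm']
    exact_mod_cast Nat.cast_le.mpr hm'le
  exact (chromaticNumber_le_iff_colorable).mp hle2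
lemma overlap_right_lower (C : LabeledMinCounterexample) (hx1 : 1 ≤ C.x) (hr1 : 1 ≤ C.r)
    {u : CArc} (hu : u ∈ C.F.arcs) : C.x + 1 ≤ (C.F.overlap u.right).card := by
  by_contra hcon
  push_neg at hcon
  have hOr : (C.F.overlap u.right).card ≤ C.x := by omega
  obtain ⟨c'⟩ := erase_colorable C u hu
  set N := C.r + C.x - 1 with hN
  set T : Finset CArc := (C.F.overlap u.left ∪ C.F.overlap u.right).erase u with hT
  have hmemTl : u ∈ C.F.overlap u.left := Finset.mem_filter.mpr ⟨hu, CArc.left_mem u⟩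
  have hmemTr : u ∈ C.F.overlap u.right := Finset.mem_filter.mpr ⟨hu, CArc.right_mem u⟩
  have hcardT : T.card ≤ C.r + C.x - 2 := by
    have h1 := Finset.card_union_add_card_inter (C.F.overlap u.left) (C.F.overlap u.right)
    have h2 : 1 ≤ ((C.F.overlap u.left) ∩ (C.F.overlap u.right)).card :=
      Finset.card_pos.mpr ⟨u, Finset.mem_inter.mpr ⟨hmemTl, hmemTr⟩⟩
    have h3 := overlap_card_le C u.left
    have h4 : T.card = ((C.F.overlap u.left) ∪ (C.F.overlap u.right)).card - 1 := by
      rw [hT]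
      exact Finset.card_erase_of_mem (Finset.mem_union_left _ hmemTl)
    have h5 : 1 ≤ ((C.F.overlap u.left) ∪ (C.F.overlap u.right)).card :=
      Finset.card_pos.mpr ⟨u, Finset.mem_union_left _ hmemTl⟩
    omega
  set used : Finset (Fin N) :=
    (Finset.univ.filter (fun b : {a : CArc // a ∈ (eraseFam C.F u).arcs} => b.1 ∈ T)).image
      (fun b => c' b) with hused_def
  have hused : used.card < N := by
    have h4 : (Finset.univ.filter
        (fun b : {a : CArc // a ∈ (eraseFam C.F u).arcs} => b.1 ∈ T)).card ≤ T.card := by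
      apply Finset.card_le_card_of_injOn (fun b => b.1)
      · exact fun b hb => (Finset.mem_filter.mp hb).2
      · exact fun b _ b' _ h => Subtype.ext h
    have h5 := Finset.card_image_le (s := Finset.univ.filter
        (fun b : {a : CArc // a ∈ (eraseFam C.F u).arcs} => b.1 ∈ T)) (f := fun b => c' b)
    rw [hused_def]
    omega
  obtain ⟨col, hcol⟩ : ∃ col : Fin N, col ∉ used := by
    by_contra h
    push_neg at h
    have h6 : (Finset.univ : Finset (Fin N)).card ≤ used.card :=
      Finset.card_le_card (fun col _ => h col)
    rw [Finset.card_univ, Fintype.card_fin] at h6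
    omega
  have hmemT_of_nbr : ∀ (w : {a : CArc // a ∈ C.F.arcs}), w.1 ≠ u →
      (u.pts ∩ w.1.pts).Nonempty → w.1 ∈ T := by
    intro w hwu hint
    have hwend : u.left ∈ w.1.pts ∨ u.right ∈ w.1.pts := by
      by_contra hcontra
      push_neg at hcontra
      exact nbr_lemma C.proper hu w.2 hint hcontra.1 hcontra.2
    refine Finset.mem_erase.mpr ⟨hwu, ?_⟩
    rcases hwend with h | h
    · exact Finset.mem_union_left _ (Finset.mem_filter.mpr ⟨w.2, h⟩)
    · exact Finset.mem_union_right _ (Finset.mem_filter.mpr ⟨w.2, h⟩)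
  have hmem_erase : ∀ (v : {a : CArc // a ∈ C.F.arcs}), v.1 ≠ u →
      v.1 ∈ (eraseFam C.F u).arcs := by
    intro v hv
    exact Finset.mem_erase.mpr ⟨hv, v.2⟩
  classical
  let cc : {a : CArc // a ∈ C.F.arcs} → Fin N := fun v =>
    if h : v.1 = u then col else c' ⟨v.1, hmem_erase v h⟩
  have hused_mem : ∀ (w : {a : CArc // a ∈ C.F.arcs}) (h : w.1 ≠ u), w.1 ∈ T →
      c' ⟨w.1, hmem_erase w h⟩ ∈ used := by
    intro w h hwT
    rw [hused_def]
    exact Finset.mem_image_of_mem _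
      (Finset.mem_filter.mpr ⟨Finset.mem_univ _, hwT⟩)
  have hvalid : ∀ {v w : {a : CArc // a ∈ C.F.arcs}}, C.F.graph.Adj v w → cc v ≠ cc w := by
    intro v w hadj
    obtain ⟨hne, hint⟩ := hadj
    have hvw : v.1 ≠ w.1 := fun h => hne (Subtype.ext h)
    by_cases hv : v.1 = u
    · have hw : w.1 ≠ u := fun h => hvw (hv.trans h.symm)
      have hwT : w.1 ∈ T := hmemT_of_nbr w hw (hv ▸ hint)
      simp only [cc, dif_pos hv, dif_neg hw]
      intro heq
      exact hcol (heq ▸ hused_mem w hw hwT)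
    · by_cases hw : w.1 = u
      · have hvT : v.1 ∈ T := by
          apply hmemT_of_nbr v hv
          obtain ⟨z, hz1, hz2⟩ := hint
          exact ⟨z, hw ▸ hz2, hz1⟩
        simp only [cc, dif_neg hv, dif_pos hw]
        intro heq
        exact hcol (heq ▸ hused_mem v hv hvT)
      · have hadj' : (eraseFam C.F u).graph.Adj ⟨v.1, hmem_erase v hv⟩ ⟨w.1, hmem_erase w hw⟩ :=
          ⟨by intro h; apply hvw; have h2 := Subtype.ext_iff.mp h; exact h2, hint⟩
        have := c'.valid hadj'
        simp only [cc, dif_neg hv, dif_neg hw]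
        exact this
  have hcolorable : C.F.graph.Colorable N :=
    ⟨SimpleGraph.Coloring.mk cc (fun {v w} h => hvalid h)⟩
  have hle := hcolorable.chromaticNumber_le
  rw [C.hx] at hle
  have hfin : C.r + C.x ≤ N := by exact_mod_cast hle
  omega
lemma arcs_enum (C : LabeledMinCounterexample) {b : CArc} (hb : b ∈ C.F.arcs) :
    (∃ i, 1 ≤ i ∧ i ≤ C.r ∧ b = C.q i) ∨ (∃ m, 1 ≤ m ∧ m ≤ C.k ∧ b = C.a m) := by
  classical
  set Q := (Finset.Icc 1 C.r).image C.q with hQ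
  set A := (Finset.Icc 1 C.k).image C.a with hA
  have hQsub : Q ⊆ C.F.overlap C.p₀ := by
    intro c hc
    obtain ⟨i, hi, rfl⟩ := Finset.mem_image.mp hc
    obtain ⟨hi1, hir⟩ := Finset.mem_Icc.mp hi
    exact C.q_mem i hi1 hir
  have hQcard : Q.card = C.r := by
    rw [hQ, Finset.card_image_of_injOn, Nat.card_Icc]
    · omega
    · intro i hi i' hi' hqe
      obtain ⟨h1, h2⟩ := Finset.mem_Icc.mp hi
      obtain ⟨h1', h2'⟩ := Finset.mem_Icc.mp hi'
      exact C.q_inj i i' h1 h2 h1' h2' hqe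
  have hQeq : Q = C.F.overlap C.p₀ :=
    Finset.eq_of_subset_of_card_le hQsub (by rw [hQcard, C.hr])
  have hAsub : A ⊆ C.F.arcs \ C.F.overlap C.p₀ := by
    intro c hc
    obtain ⟨m, hm, rfl⟩ := Finset.mem_image.mp hc
    obtain ⟨h1, h2⟩ := Finset.mem_Icc.mp hm
    exact Finset.mem_sdiff.mpr ⟨(C.a_mem m h1 h2).1, (C.a_mem m h1 h2).2⟩
  have hAcard : A.card = C.k := by
    rw [hA, Finset.card_image_of_injOn, Nat.card_Icc]
    · omega
    · intro m hm m' hm' hae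
      obtain ⟨h1, h2⟩ := Finset.mem_Icc.mp hm
      obtain ⟨h1', h2'⟩ := Finset.mem_Icc.mp hm'
      exact C.a_inj m m' h1 h2 h1' h2' hae
  have hsdcard : (C.F.arcs \ C.F.overlap C.p₀).card = C.k := by
    rw [Finset.card_sdiff_of_subset (show C.F.overlap C.p₀ ⊆ C.F.arcs from Finset.filter_subset _ _), C.hr, C.hk]
    omega
  have hAeq : A = C.F.arcs \ C.F.overlap C.p₀ :=
    Finset.eq_of_subset_of_card_le hAsub (by rw [hAcard, hsdcard])
  by_cases hov : b ∈ C.F.overlap C.p₀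
  · left
    have : b ∈ Q := hQeq ▸ hov
    obtain ⟨i, hi, hbi⟩ := Finset.mem_image.mp this
    obtain ⟨h1, h2⟩ := Finset.mem_Icc.mp hi
    exact ⟨i, h1, h2, hbi.symm⟩
  · right
    have : b ∈ A := hAeq ▸ Finset.mem_sdiff.mpr ⟨hb, hov⟩
    obtain ⟨m, hm, hbm⟩ := Finset.mem_image.mp this
    obtain ⟨h1, h2⟩ := Finset.mem_Icc.mp hm
    exact ⟨m, h1, h2, hbm.symm⟩

lemma angFrom_shift_ge {p₀ z q : AddCircle (1:ℝ)} (h : angFrom p₀ z ≤ angFrom p₀ q) :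
    angFrom z q = angFrom p₀ q - angFrom p₀ z := by
  have hmq := angFrom_mem p₀ q
  have hmz := angFrom_mem p₀ z
  have heq : q = z + ((angFrom p₀ q - angFrom p₀ z : ℝ) : AddCircle (1:ℝ)) := by
    rw [AddCircle.coe_sub, coe_angFrom, coe_angFrom]
    abel
  have h2 := angFrom_coe z (t := angFrom p₀ q - angFrom p₀ z)
    ⟨by linarith, by linarith [hmq.2, hmz.1]⟩
  rw [← heq] at h2
  exact h2

lemma angFrom_shift_lt {p₀ z q : AddCircle (1:ℝ)} (h : angFrom p₀ q < angFrom p₀ z) :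
    angFrom z q = angFrom p₀ q - angFrom p₀ z + 1 := by
  have hmq := angFrom_mem p₀ q
  have hmz := angFrom_mem p₀ z
  have heq : q = z + ((angFrom p₀ q - angFrom p₀ z + 1 : ℝ) : AddCircle (1:ℝ)) := by
    rw [AddCircle.coe_add, AddCircle.coe_sub, coe_angFrom, coe_angFrom, AddCircle.coe_period]
    abel
  have h2 := angFrom_coe z (t := angFrom p₀ q - angFrom p₀ z + 1)
    ⟨by linarith [hmq.1, hmz.2], by linarith⟩
  rw [← heq] at h2
  exact h2
/-- In the labeled minimum counterexample, for all `1 ≤ j ≤ x` and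
`1 ≤ i ≤ k − x`, the arc `a (i+j)` is clockwise adjacent to the arc `a i`. -/
theorem a_succ_cw_adjacent (C : LabeledMinCounterexample) :
    ∀ i j, 1 ≤ j → j ≤ C.x → 1 ≤ i → i ≤ C.k - C.x →
      C.F.CwAdj (C.a i) (C.a (i + j)) := by
  intro i j hj1 hjx hi1 hik
  have hx1 : 1 ≤ C.x := le_trans hj1 hjx
  have hkx : C.x + i ≤ C.k := by omega
  have hik' : i ≤ C.k := by omega
  have hijk : i + j ≤ C.k := by omega
  have hai := C.a_mem i hi1 hik'
  have haij := C.a_mem (i + j) (by omega) hijk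
  have hr1 : 1 ≤ C.r := by
    have h1 : 1 ≤ (C.F.overlap (C.a i).left).card :=
      Finset.card_pos.mpr ⟨C.a i, Finset.mem_filter.mpr ⟨hai.1, CArc.left_mem _⟩⟩
    exact le_trans h1 (overlap_card_le C _)
  set p := (C.a i).right with hp
  set O := C.F.overlap p with hO
  have hcard : C.x + 1 ≤ O.card := overlap_right_lower C hx1 hr1 hai.1
  have haiO : C.a i ∈ O := Finset.mem_filter.mpr ⟨hai.1, CArc.right_mem _⟩
  by_cases hmem : C.a (i + j) ∈ O
  · refine ⟨fun h => ?_, hmem⟩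
    have := C.a_inj (i + j) i (by omega) hijk hi1 hik' h
    omega
  exfalso
  set S := O.erase (C.a i) with hS
  have hScard : C.x ≤ S.card := by
    rw [hS, Finset.card_erase_of_mem haiO]
    omega
  set Bad := (Finset.Icc (i + 1) (i + j - 1)).image C.a with hBad
  have hBadcard : Bad.card ≤ j - 1 := by
    refine le_trans Finset.card_image_le ?_
    rw [Nat.card_Icc]
    omega
  have hnotsub : ¬ S ⊆ Bad := by
    intro hsub
    have := Finset.card_le_card hsub
    omega
  obtain ⟨v, hvS, hvBad⟩ := Finset.not_subset.mp hnotsub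
  have hvO : v ∈ O := Finset.mem_of_mem_erase hvS
  have hvarcs : v ∈ C.F.arcs := (Finset.mem_filter.mp hvO).1
  have hpv : p ∈ v.pts := (Finset.mem_filter.mp hvO).2
  have hvai : v ≠ C.a i := (Finset.mem_erase.mp hvS).1
  have hvaij : v ≠ C.a (i + j) := fun h => hmem (h ▸ hvO)
  have hpaij : p ∉ (C.a (i + j)).pts := fun h => hmem (Finset.mem_filter.mpr ⟨haij.1, h⟩)
  apply gap_lemma C.proper hvarcs haij.1 p hpv hpaij
  -- angle comparison: angFrom p (a (i+j)).right ≤ angFrom p v.right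
  have hαp : angFrom C.p₀ ((C.a i).right) < angFrom C.p₀ ((C.a (i + j)).right) :=
    C.a_order i (i + j) hi1 (by omega) hijk
  have hw_eq : angFrom p ((C.a (i + j)).right)
      = angFrom C.p₀ ((C.a (i + j)).right) - angFrom C.p₀ p :=
    angFrom_shift_ge (le_of_lt hαp)
  have hmw := angFrom_mem C.p₀ ((C.a (i + j)).right)
  have hmv := angFrom_mem C.p₀ v.right
  rcases arcs_enum C hvarcs with ⟨ℓ, hℓ1, hℓr, hveq⟩ | ⟨m, hm1, hmk, hveq⟩
  · -- v = q ℓ : its right endpoint is before p₀-wise that of a i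
    have hlt : angFrom C.p₀ v.right < angFrom C.p₀ p := by
      rw [hveq, hp]
      exact C.qa_order ℓ i hℓ1 hℓr hi1 hik'
    have hv_eq : angFrom p v.right
        = angFrom C.p₀ v.right - angFrom C.p₀ p + 1 := angFrom_shift_lt hlt
    rw [hw_eq, hv_eq]
    linarith [hmw.2, hmv.1]
  · -- v = a m
    rcases lt_trichotomy m i with hmi | hmi | hmi
    · have hlt : angFrom C.p₀ v.right < angFrom C.p₀ p := by
        rw [hveq, hp]
        exact C.a_order m i hm1 hmi hik'
      have hv_eq : angFrom p v.right
          = angFrom C.p₀ v.right - angFrom C.p₀ p + 1 := angFrom_shift_lt hlt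
      rw [hw_eq, hv_eq]
      linarith [hmw.2, hmv.1]
    · exact absurd (hveq.trans (by rw [hmi])) hvai
    · -- i < m; m not in (i, i+j] so m > i + j
      have hmnotin : ¬ (i + 1 ≤ m ∧ m ≤ i + j - 1) := by
        intro hin
        exact hvBad (hBad ▸ Finset.mem_image.mpr ⟨m, Finset.mem_Icc.mpr hin, hveq.symm⟩)
      have hmne : m ≠ i + j := fun h => hvaij (hveq.trans (by rw [h]))
      have hmgt : i + j < m := by omega
      have hlt2 : angFrom C.p₀ ((C.a (i + j)).right) < angFrom C.p₀ v.right := by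
        rw [hveq]
        exact C.a_order (i + j) m (by omega) hmgt hmk
      have hv_eq : angFrom p v.right
          = angFrom C.p₀ v.right - angFrom C.p₀ p :=
        angFrom_shift_ge (le_of_lt (lt_trans hαp hlt2))
      rw [hw_eq, hv_eq]
      linarith
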